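/- Let 𝒢 be a μ-gambler whose only betting state is r (all other states have betting function constantly 1), and suppose γ(r, a) > 0 for all a. Let Y be the (infinite) subsequence of letters of X read while the automaton is in state r. If Y is μ-balanced (each letter a occurs in Y with asymptotic frequency μ(a)) and γ(r, ·) is not constantly 1, then capital(𝒢, X[0..n]) → 0 as n → ∞; in particular 𝒢 does not win. -/

import Mathlib

open Filter Topology

/-- The prefix `X(0) X(1) ⋯ X(n-1)` of an infinite sequence, as a list. -/
def pref {A : Type*} (X : ℕ → A) (n : ℕ) : List A := (List.range n).map X

/-- Number of occurrences of the word `w` in the prefix `X[0..n]`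
(indices `i` with `0 ≤ i ≤ n - |w| + 1`). -/
def nbocc {A : Type*} [DecidableEq A] (w : List A) (X : ℕ → A) (n : ℕ) : ℕ :=
  ((Finset.range (n + 2 - w.length)).filter
    (fun i => (List.range w.length).map (fun j => X (i + j)) = w)).card

/-- Frequency of occurrences of `w` in `X[0..n]`. -/
noncomputable def freq {A : Type*} [DecidableEq A] (w : List A) (X : ℕ → A) (n : ℕ) : ℝ :=
  (nbocc w X n : ℝ) / ((n + 2 - w.length : ℕ) : ℝ)

/-- The Bernoulli measure of a word: product of the measures of its letters. -/
def wmeas {A : Type*} (μ : A → ℝ) (w : List A) : ℝ := (w.map μ).prod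

/-- `X` is `μ`-normal: every nonempty word occurs with asymptotic frequency `μ(w)`. -/
def BNormal {A : Type*} [DecidableEq A] (μ : A → ℝ) (X : ℕ → A) : Prop :=
  ∀ w : List A, w ≠ [] → Tendsto (fun n => freq w X n) atTop (𝓝 (wmeas μ w))

/-- Iterated transition function of a deterministic automaton. -/
def dstar {Q A : Type*} (δ : Q → A → Q) (q : Q) (w : List A) : Q := w.foldl δ q

/-- Capital of an automatic gambler started in state `q` after reading `w`. -/
def capital {Q A : Type*} (δ : Q → A → Q) (γ : Q → A → ℝ) : Q → List A → ℝ
  | _, [] => 1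
  | q, a :: w => γ q a * capital δ γ (δ q a) w

lemma capital_append {Q A : Type*} (δ : Q → A → Q) (γ : Q → A → ℝ) (q : Q)
    (w : List A) (a : A) :
    capital δ γ q (w ++ [a]) = capital δ γ q w * γ (dstar δ q w) a := by
  induction w generalizing q with
  | nil => simp [capital, dstar]
  | cons b w ih =>
      show γ q b * capital δ γ (δ q b) (w ++ [a]) = _
      rw [ih, capital]
      simp [dstar, mul_assoc]

lemma pref_succ {A : Type*} (X : ℕ → A) (n : ℕ) :
    pref X (n + 1) = pref X n ++ [X n] := by
  simp [pref, List.range_succ]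

lemma capital_prod {Q A : Type*} (δ : Q → A → Q) (γ : Q → A → ℝ) (q : Q)
    (X : ℕ → A) (n : ℕ) :
    capital δ γ q (pref X n) = ∏ i ∈ Finset.range n, γ (dstar δ q (pref X i)) (X i) := by
  induction n with
  | zero => simp [pref, capital]
  | succ n ih => rw [pref_succ, capital_append, ih, Finset.prod_range_succ]

lemma downclosed_eq_range (S : Finset ℕ) (h : ∀ j ∈ S, ∀ i < j, i ∈ S) :
    S = Finset.range S.card := by
  ext j
  simp only [Finset.mem_range]
  constructor
  · intro hj
    have hsub : Finset.range (j + 1) ⊆ S := by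
      intro i hi
      simp only [Finset.mem_range, Nat.lt_succ_iff] at hi
      rcases hi.lt_or_eq with hlt | rfl
      · exact h j hj i hlt
      · exact hj
    have := Finset.card_le_card hsub
    simpa using this
  · intro hj
    by_contra hjS
    have hsub : S ⊆ Finset.range j := by
      intro e he
      simp only [Finset.mem_range]
      by_contra hle
      push_neg at hle
      rcases hle.lt_or_eq with hlt | rfl
      · exact hjS (h e he j hlt)
      · exact hjS he
    have := Finset.card_le_card hsub
    simp at this
    omega


/-- a `μ`-gambler whose only betting state is `r`, with positive bets that
are not constantly `1`, loses all its capital on any `X` such that the subsequence `Y`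
of letters read in state `r` is infinite and `μ`-balanced. -/
theorem single_state_gambler_capital_to_zero
    {Q A : Type*} [Fintype Q] [DecidableEq Q] [Fintype A] [DecidableEq A]
    (μ : A → ℝ) (hμpos : ∀ a, 0 < μ a) (hμsum : ∑ a, μ a = 1)
    (δ : Q → A → Q) (γ : Q → A → ℝ) (qI r : Q)
    (hfair : ∀ q, ∑ a, μ a * γ q a = 1)
    (honly : ∀ q a, q ≠ r → γ q a = 1)
    (hpos : ∀ a, 0 < γ r a)
    (hnontriv : ∃ a, γ r a ≠ 1)
    (X : ℕ → A) (φ : ℕ → ℕ) (hφ : StrictMono φ)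
    (hφrange : Set.range φ = {i : ℕ | dstar δ qI (pref X i) = r})
    (hbal : ∀ a : A,
      Tendsto (fun k => (((Finset.range k).filter (fun j => X (φ j) = a)).card : ℝ) / k)
        atTop (𝓝 (μ a))) :
    Tendsto (fun n => capital δ γ qI (pref X n)) atTop (𝓝 0) := by
  classical
  set s : ℕ → Q := fun i => dstar δ qI (pref X i) with hs
  -- the product formula restricted to visits to r
  set J : ℕ → Finset ℕ := fun n => (Finset.range n).filter (fun j => φ j < n) with hJ
  set k : ℕ → ℕ := fun n => (J n).card with hk
  set P : ℕ → ℝ := fun m => ∏ j ∈ Finset.range m, γ r (X (φ j)) with hP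
  have hJrange : ∀ n, J n = Finset.range (k n) := by
    intro n
    apply downclosed_eq_range
    intro j hj i hij
    simp only [hJ, Finset.mem_filter, Finset.mem_range] at hj ⊢
    exact ⟨lt_trans hij hj.1, lt_trans (hφ hij) hj.2⟩
  have hcap : ∀ n, capital δ γ qI (pref X n) = P (k n) := by
    intro n
    rw [capital_prod]
    have h1 : ∀ i ∈ Finset.range n, γ (s i) (X i) ≠ 1 → s i = r := by
      intro i _ hne
      by_contra h
      exact hne (honly _ _ h)
    rw [← Finset.prod_filter_of_ne h1]
    have h2 : (Finset.range n).filter (fun i => s i = r) = (J n).image φ := by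
      ext i
      simp only [Finset.mem_filter, Finset.mem_range, Finset.mem_image, hJ]
      constructor
      · rintro ⟨hin, hir⟩
        have : i ∈ Set.range φ := by rw [hφrange]; exact hir
        obtain ⟨j, rfl⟩ := this
        exact ⟨j, ⟨lt_of_le_of_lt (hφ.le_apply) hin, hin⟩, rfl⟩
      · rintro ⟨j, ⟨_, hjn⟩, rfl⟩
        refine ⟨hjn, ?_⟩
        have : φ j ∈ Set.range φ := ⟨j, rfl⟩
        rw [hφrange] at this
        exact this
    rw [h2, Finset.prod_image (fun a _ b _ h => hφ.injective h)]
    rw [hJrange]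
    apply Finset.prod_congr rfl
    intro j hj
    congr 1
    have : φ j ∈ Set.range φ := ⟨j, rfl⟩
    rw [hφrange] at this
    exact this
  -- k tends to infinity
  have hktop : Tendsto k atTop atTop := by
    rw [tendsto_atTop]
    intro m
    rw [eventually_atTop]
    refine ⟨φ m + 1, fun n hn => ?_⟩
    have hsub : Finset.range m ⊆ J n := by
      intro j hj
      simp only [Finset.mem_range] at hj
      have h1 : φ j < φ m := hφ hj
      have h2 : j ≤ φ j := hφ.le_apply
      simp only [hJ, Finset.mem_filter, Finset.mem_range]
      omega
    have := Finset.card_le_card hsub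
    simpa [hk] using this
  -- the per-letter mean log is negative
  set L : ℝ := ∑ a, μ a * Real.log (γ r a) with hL
  have hLneg : L < 0 := by
    obtain ⟨a₀, ha₀⟩ := hnontriv
    have hnc : ∃ b, γ r b ≠ γ r a₀ := by
      by_contra h
      push_neg at h
      have : ∑ a, μ a * γ r a = γ r a₀ := by
        simp only [h]
        rw [← Finset.sum_mul, hμsum, one_mul]
      exact ha₀ (by rw [← hfair r, this])
    obtain ⟨b, hb⟩ := hnc
    have hjensen := strictConcaveOn_log_Ioi.lt_map_sum (t := Finset.univ)
      (w := μ) (p := γ r) (fun a _ => hμpos a) hμsum (fun a _ => hpos a)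
      ⟨b, Finset.mem_univ b, a₀, Finset.mem_univ a₀, hb⟩
    simp only [smul_eq_mul] at hjensen
    calc L < Real.log (∑ a, μ a * γ r a) := hjensen
      _ = 0 := by rw [hfair r, Real.log_one]
  -- P is positive
  have hPpos : ∀ m, 0 < P m := fun m => Finset.prod_pos (fun j _ => hpos _)
  -- log P m = ∑_a count * log
  have hlogP : ∀ m, Real.log (P m) =
      ∑ a, (((Finset.range m).filter (fun j => X (φ j) = a)).card : ℝ) * Real.log (γ r a) := by
    intro m
    rw [hP, Real.log_prod (fun j _ => (hpos _).ne')]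
    rw [← Finset.sum_fiberwise_of_maps_to (g := fun j => X (φ j)) (fun j _ => Finset.mem_univ _)]
    apply Finset.sum_congr rfl
    intro a _
    rw [Finset.sum_congr rfl (fun j hj => by
      rw [(Finset.mem_filter.mp hj).2]), Finset.sum_const, nsmul_eq_mul]
  -- averages converge to L
  have havg : Tendsto (fun m => Real.log (P m) / m) atTop (𝓝 L) := by
    have : ∀ m : ℕ, Real.log (P m) / m =
        ∑ a, (((Finset.range m).filter (fun j => X (φ j) = a)).card : ℝ) / m * Real.log (γ r a) := by
      intro m
      rw [hlogP, Finset.sum_div]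
      apply Finset.sum_congr rfl
      intro a _
      ring
    simp only [this]
    rw [hL]
    exact tendsto_finset_sum _ (fun a _ => (hbal a).mul_const _)
  -- log P → -∞
  have hlogbot : Tendsto (fun m => Real.log (P m)) atTop atBot := by
    have hhalf : ∀ᶠ m in atTop, Real.log (P m) / m < L / 2 :=
      havg.eventually_lt_const (by linarith)
    have hle : (fun m : ℕ => Real.log (P m)) ≤ᶠ[atTop] (fun m : ℕ => (m : ℝ) * (L / 2)) := by
      filter_upwards [hhalf, eventually_ge_atTop 1] with m hm hm1
      have hmpos : (0 : ℝ) < m := by exact_mod_cast hm1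
      have heq : Real.log (P m) = m * (Real.log (P m) / m) := by
        field_simp
      rw [heq]
      exact mul_le_mul_of_nonneg_left (le_of_lt hm) hmpos.le
    exact tendsto_atBot_mono' atTop hle
      ((tendsto_natCast_atTop_atTop).atTop_mul_const_of_neg (by linarith))
  -- P → 0
  have hPzero : Tendsto P atTop (𝓝 0) := by
    exact (Real.tendsto_exp_atBot.comp hlogbot).congr (fun m => Real.exp_log (hPpos m))
  simp only [hcap]
  exact hPzero.comp hktop
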